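/- Let Q be a quantale on the pentagon N5, with elements ⊥ < α < γ < ⊤, ⊥ < β < ⊤ and β incomparable with α and γ, satisfying γ * a ⊔ a * γ ≤ a for all a ∈ Q, and assume γ * γ ≠ γ (equivalently, Q is not unital). Then Q is semi-unital (a ≤ ⊤ * a and a ≤ a * ⊤ for all a ∈ Q) if and only if γ * γ = α, β * γ = β and γ * β = β. -/
import Mathlib


/-- Let `Q` be a quantale on the pentagon `N5` satisfying
`γ * a ⊔ a * γ ≤ a` for all `a`, with `γ * γ ≠ γ` (non-unital). Then `Q` is
semi-unital iff `γ * γ = α`, `β * γ = β` and `γ * β = β`. -/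
theorem stmt_17 {Q : Type*} [CompleteLattice Q] (mul : Q → Q → Q)
    (hassoc : ∀ a b c : Q, mul (mul a b) c = mul a (mul b c))
    (hsSup_left : ∀ (A : Set Q) (b : Q), mul (sSup A) b = ⨆ a ∈ A, mul a b)
    (hsSup_right : ∀ (A : Set Q) (b : Q), mul b (sSup A) = ⨆ a ∈ A, mul b a)
    (α γ β : Q)
    (hdistinct : ([⊥, α, γ, β, ⊤] : List Q).Pairwise (· ≠ ·))
    (hcover : ∀ q : Q, q = ⊥ ∨ q = α ∨ q = γ ∨ q = β ∨ q = ⊤)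
    (h1 : (⊥ : Q) < α) (h2 : α < γ) (h3 : γ < ⊤) (h4 : (⊥ : Q) < β) (h5 : β < ⊤)
    (hβα : ¬ β ≤ α ∧ ¬ α ≤ β) (hβγ : ¬ β ≤ γ ∧ ¬ γ ≤ β)
    (hprop : ∀ a : Q, mul γ a ⊔ mul a γ ≤ a)
    (hnonunital : mul γ γ ≠ γ) :
    (∀ a : Q, a ≤ mul ⊤ a ∧ a ≤ mul a ⊤) ↔
      (mul γ γ = α ∧ mul β γ = β ∧ mul γ β = β) := by
  obtain ⟨hβα1, hβα2⟩ := hβα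
  obtain ⟨hβγ1, hβγ2⟩ := hβγ
  have hsupl : ∀ x y b : Q, mul (x ⊔ y) b = mul x b ⊔ mul y b := by
    intro x y b
    rw [← sSup_pair, hsSup_left, iSup_pair]
  have hsupr : ∀ x y b : Q, mul b (x ⊔ y) = mul b x ⊔ mul b y := by
    intro x y b
    rw [← sSup_pair, hsSup_right, iSup_pair]
  have htop : γ ⊔ β = ⊤ := by
    rcases hcover (γ ⊔ β) with h | h | h | h | h
    · exact absurd ((h ▸ le_sup_left : γ ≤ ⊥).trans_lt (h1.trans h2)) (lt_irrefl γ)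
    · exact absurd (h ▸ le_sup_left : γ ≤ α) (not_le_of_gt h2)
    · exact absurd (h ▸ le_sup_right : β ≤ γ) hβγ1
    · exact absurd (h ▸ le_sup_left : γ ≤ β) hβγ2
    · exact h
  constructor
  · intro h
    have hγ1 := (h γ).1
    have hγ2 := (h γ).2
    rw [← htop, hsupl] at hγ1
    rw [← htop, hsupr] at hγ2
    have hγγle : mul γ γ ≤ γ := le_sup_left.trans (hprop γ)
    have hβγval : mul β γ = β := by
      rcases hcover (mul β γ) with hv | hv | hv | hv | hv
      · rw [hv, sup_bot_eq] at hγ1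
        exact absurd (le_antisymm hγγle hγ1) hnonunital
      · exact absurd (hv ▸ (le_sup_right.trans (hprop β)) : α ≤ β) hβα2
      · exact absurd (hv ▸ (le_sup_right.trans (hprop β)) : γ ≤ β) hβγ2
      · exact hv
      · exact absurd (hv ▸ (le_sup_right.trans (hprop β)) : (⊤ : Q) ≤ β)
          (not_le_of_gt h5)
    have hγγval : mul γ γ = α := by
      rcases hcover (mul γ γ) with hv | hv | hv | hv | hv
      · rw [hv, bot_sup_eq, hβγval] at hγ1
        exact absurd hγ1 hβγ2
      · exact hv
      · exact absurd hv hnonunital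
      · exact absurd (hv ▸ hγγle : β ≤ γ) hβγ1
      · exact absurd (hv ▸ hγγle : (⊤ : Q) ≤ γ) (not_le_of_gt h3)
    have hγβle : mul γ β ≤ β := le_sup_left.trans (hprop β)
    have hγβval : mul γ β = β := by
      rcases hcover (mul γ β) with hv | hv | hv | hv | hv
      · rw [hγγval, hv, sup_bot_eq] at hγ2
        exact absurd hγ2 (not_le_of_gt h2)
      · exact absurd (hv ▸ hγβle : α ≤ β) hβα2
      · exact absurd (hv ▸ hγβle : γ ≤ β) hβγ2
      · exact hv
      · exact absurd (hv ▸ hγβle : (⊤ : Q) ≤ β) (not_le_of_gt h5)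
    exact ⟨hγγval, hβγval, hγβval⟩
  · rintro ⟨hγγ, hβγv, hγβv⟩
    have hαβ : α ⊔ β = ⊤ := by
      rcases hcover (α ⊔ β) with h | h | h | h | h
      · exact absurd ((h ▸ le_sup_left : α ≤ ⊥).trans_lt h1) (lt_irrefl α)
      · exact absurd (h ▸ le_sup_right : β ≤ α) hβα1
      · exact absurd (h ▸ le_sup_right : β ≤ γ) hβγ1
      · exact absurd (h ▸ le_sup_left : α ≤ β) hβα2
      · exact h
    have hγtop : mul γ ⊤ = ⊤ := by rw [← htop, hsupr, hγγ, hγβv, hαβ, htop]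
    have htopγ : mul ⊤ γ = ⊤ := by rw [← htop, hsupl, hγγ, hβγv, hαβ, htop]
    have htopα : mul ⊤ α = ⊤ := by rw [← hγγ, ← hassoc, htopγ, htopγ]
    have hαtop : mul α ⊤ = ⊤ := by rw [← hγγ, hassoc, hγtop, hγtop]
    have htopβ : mul ⊤ β = mul γ β ⊔ mul β β := by rw [← hsupl, htop]
    have hβtop : mul β ⊤ = mul β γ ⊔ mul β β := by rw [← hsupr, htop]
    have htoptop : mul ⊤ ⊤ = ⊤ := by
      have h' : mul ⊤ ⊤ = mul γ ⊤ ⊔ mul β ⊤ := by rw [← hsupl, htop]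
      rw [h', hγtop, top_sup_eq]
    intro a
    rcases hcover a with ha | ha | ha | ha | ha <;> subst ha
    · exact ⟨bot_le, bot_le⟩
    · rw [htopα, hαtop]; exact ⟨le_top, le_top⟩
    · rw [htopγ, hγtop]; exact ⟨le_top, le_top⟩
    · rw [htopβ, hβtop, hγβv, hβγv]; exact ⟨le_sup_left, le_sup_left⟩
    · rw [htoptop]; exact ⟨le_top, le_top⟩
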